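/- Let H be a distribution function of a random variable bounded in absolute value by 2N (N > 0) and let Φ be the standard normal distribution function. Then the mean a = ∫ x dH(x) satisfies |a| ≤ 8N·‖H − Φ‖, where ‖·‖ is the Kolmogorov distance. -/

import Mathlib

open Real MeasureTheory Set ProbabilityTheory

noncomputable def stdGaussianDensity (t : ℝ) : ℝ :=
  (Real.sqrt (2 * Real.pi))⁻¹ * Real.exp (-t ^ 2 / 2)

noncomputable def stdNormalCDF (x : ℝ) : ℝ :=
  ∫ t in Set.Iic x, stdGaussianDensity t

lemma sgd_int : Integrable stdGaussianDensity := by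
  have h : Integrable (fun t : ℝ => Real.exp (-(1/2 : ℝ) * t ^ 2)) :=
    integrable_exp_neg_mul_sq (by norm_num)
  have := h.const_mul (Real.sqrt (2 * Real.pi))⁻¹
  refine this.congr (Filter.Eventually.of_forall fun t => ?_)
  unfold stdGaussianDensity
  ring_nf

lemma sgd_total : ∫ t, stdGaussianDensity t = 1 := by
  unfold stdGaussianDensity
  have h : ∀ t : ℝ, (Real.sqrt (2 * Real.pi))⁻¹ * Real.exp (-t ^ 2 / 2)
      = (Real.sqrt (2 * Real.pi))⁻¹ * Real.exp (-(1/2 : ℝ) * t ^ 2) := by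
    intro t; ring_nf
  simp_rw [h, integral_const_mul, integral_gaussian]
  rw [show (Real.pi / (1/2 : ℝ)) = 2 * Real.pi by ring]
  rw [inv_mul_cancel₀]
  positivity

lemma sgd_nonneg (t : ℝ) : 0 ≤ stdGaussianDensity t := by
  unfold stdGaussianDensity; positivity

lemma snc_nonneg (x : ℝ) : 0 ≤ stdNormalCDF x :=
  integral_nonneg fun t => sgd_nonneg t

lemma snc_le_one (x : ℝ) : stdNormalCDF x ≤ 1 := by
  rw [← sgd_total]
  exact setIntegral_le_integral sgd_int (Filter.Eventually.of_forall fun t => sgd_nonneg t)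

lemma snc_add_neg (x : ℝ) : stdNormalCDF x + stdNormalCDF (-x) = 1 := by
  have heven : ∀ t : ℝ, stdGaussianDensity (-t) = stdGaussianDensity t := by
    intro t; unfold stdGaussianDensity; ring_nf
  have h1 : stdNormalCDF (-x) = ∫ t in Set.Ioi x, stdGaussianDensity t := by
    unfold stdNormalCDF
    calc ∫ t in Set.Iic (-x), stdGaussianDensity t
        = ∫ t in Set.Iic (-x), stdGaussianDensity (-t) := by simp_rw [heven]
      _ = ∫ t in Set.Ioi (-(-x)), stdGaussianDensity t := integral_comp_neg_Iic (-x) _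
      _ = ∫ t in Set.Ioi x, stdGaussianDensity t := by rw [neg_neg]
  rw [h1]
  unfold stdNormalCDF
  rw [← sgd_total]
  exact intervalIntegral.integral_Iic_add_Ioi sgd_int.integrableOn sgd_int.integrableOn

theorem stmt_5 (μ : Measure ℝ) [IsProbabilityMeasure μ] (N : ℝ) (hN : 0 < N)
    (hsupp : μ (Set.Icc (-(2 * N)) (2 * N))ᶜ = 0) :
    |∫ x, x ∂μ| ≤ 8 * N * (⨆ x : ℝ, |cdf μ x - stdNormalCDF x|) := by
  set s := ⨆ x : ℝ, |cdf μ x - stdNormalCDF x| with hs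
  set Φ := stdNormalCDF
  set F := fun x => cdf μ x
  -- bounds on s
  have hbdd : BddAbove (Set.range fun x : ℝ => |cdf μ x - stdNormalCDF x|) := by
    refine ⟨2, ?_⟩
    rintro _ ⟨x, rfl⟩
    have h1 : |cdf μ x - stdNormalCDF x| ≤ |cdf μ x| + |stdNormalCDF x| := abs_sub _ _
    have h2 : |cdf μ x| ≤ 1 := abs_le.2 ⟨by linarith [cdf_nonneg μ x], cdf_le_one μ x⟩
    have h3 : |stdNormalCDF x| ≤ 1 := abs_le.2 ⟨by linarith [snc_nonneg x], snc_le_one x⟩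
    linarith
  have hsx : ∀ x, |F x - Φ x| ≤ s := fun x => le_ciSup hbdd x
  have hs0 : 0 ≤ s := le_trans (abs_nonneg _) (hsx 0)
  -- a.e. boundedness of the identity
  have hae : ∀ᵐ x ∂μ, x ∈ Set.Icc (-(2 * N)) (2 * N) := by
    have := (MeasureTheory.measure_eq_zero_iff_ae_notMem (μ := μ)).mp hsupp
    filter_upwards [this] with x hx
    simpa using hx
  have hint : Integrable (fun x : ℝ => x) μ := by
    refine Integrable.mono' (integrable_const (2 * N)) measurable_id.aestronglyMeasurable ?_
    filter_upwards [hae] with x hx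
    rw [Real.norm_eq_abs, abs_le]
    exact ⟨hx.1, hx.2⟩
  -- basic cdf facts
  have hFmeas : Measurable F := (monotone_cdf μ).measurable
  have hF01 : ∀ t, 0 ≤ F t ∧ F t ≤ 1 := fun t => ⟨cdf_nonneg μ t, cdf_le_one μ t⟩
  have hIoi : ∀ t : ℝ, (μ (Set.Ioi t)).toReal = 1 - F t := by
    intro t
    have h1 : μ (Set.Ioi t) = 1 - μ (Set.Iic t) := by
      rw [← compl_Iic, prob_compl_eq_one_sub measurableSet_Iic]
    rw [h1, ENNReal.toReal_sub_of_le prob_le_one ENNReal.one_ne_top, ENNReal.toReal_one,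
      ← measureReal_def, ← cdf_eq_real]
  have hintp : Integrable (fun x : ℝ => max x 0) μ := by
    refine Integrable.mono' (integrable_const (2 * N)) (measurable_id.max measurable_const).aestronglyMeasurable ?_
    filter_upwards [hae] with x hx
    simp only [Set.mem_Icc] at hx
    rw [Real.norm_eq_abs, abs_le]
    constructor
    · linarith [le_max_right x (0:ℝ), hN]
    · exact max_le hx.2 (by linarith)
  have hintn : Integrable (fun x : ℝ => max (-x) 0) μ := by
    refine Integrable.mono' (integrable_const (2 * N)) ((measurable_id.neg).max measurable_const).aestronglyMeasurable ?_
    filter_upwards [hae] with x hx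
    simp only [Set.mem_Icc] at hx
    rw [Real.norm_eq_abs, abs_le]
    constructor
    · linarith [le_max_right (-x) (0:ℝ), hN]
    · exact max_le (by linarith [hx.1]) (by linarith)
  -- positive part
  have hP : ∫ x, max x 0 ∂μ = ∫ t in Set.Ioc 0 (2*N), (1 - F t) := by
    have h1 := hintp.integral_eq_integral_meas_lt
      (Filter.Eventually.of_forall fun x => le_max_right x 0)
    rw [h1]
    rw [setIntegral_eq_of_subset_of_ae_diff_eq_zero measurableSet_Ioi.nullMeasurableSet
      Set.Ioc_subset_Ioi_self ?_]
    · refine setIntegral_congr_fun measurableSet_Ioc fun t ht => ?_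
      have hset : {a : ℝ | t < max a 0} = Set.Ioi t := by
        ext a
        simp only [Set.mem_setOf_eq, Set.mem_Ioi, lt_max_iff]
        constructor
        · rintro (h | h)
          · exact h
          · exact absurd h (not_lt.2 ht.1.le)
        · exact Or.inl
      rw [hset, measureReal_def, hIoi]
    · refine Filter.Eventually.of_forall fun t ht => ?_
      have ht0 : (0:ℝ) < t := ht.1
      have h2N : 2 * N < t := by
        simp only [Set.mem_diff, Set.mem_Ioi, Set.mem_Ioc, not_and, not_le] at ht
        exact ht.2 ht.1
      have hset : {a : ℝ | t < max a 0} = Set.Ioi t := by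
        ext a
        simp only [Set.mem_setOf_eq, Set.mem_Ioi, lt_max_iff]
        constructor
        · rintro (h | h)
          · exact h
          · exact absurd h (not_lt.2 ht0.le)
        · exact Or.inl
      have hnull : μ (Set.Ioi t) = 0 := by
        refine measure_mono_null ?_ hsupp
        intro a ha
        simp only [Set.mem_Ioi] at ha
        intro hmem
        simp only [Set.mem_Icc] at hmem
        linarith [hmem.2]
      rw [hset, measureReal_def, hnull]
      simp
  -- negative part
  have hQ : ∫ x, max (-x) 0 ∂μ = ∫ t in Set.Ioc 0 (2*N), F (-t) := by
    have h1 := hintn.integral_eq_integral_Ioc_meas_le (M := 2*N)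
      (Filter.Eventually.of_forall fun x => le_max_right _ 0) ?_
    · rw [h1]
      refine setIntegral_congr_fun measurableSet_Ioc fun t ht => ?_
      have hset : {a : ℝ | t ≤ max (-a) 0} = Set.Iic (-t) := by
        ext a
        simp only [Set.mem_setOf_eq, Set.mem_Iic, le_max_iff]
        constructor
        · rintro (h | h)
          · linarith
          · exact absurd h (not_le.2 ht.1)
        · intro h
          exact Or.inl (by linarith)
      rw [hset, ← cdf_eq_real]
    · filter_upwards [hae] with x hx
      simp only [Set.mem_Icc] at hx
      exact max_le (by linarith [hx.1]) (by linarith)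
  -- split the integral
  have hsplit : ∫ x, x ∂μ = (∫ x, max x 0 ∂μ) - ∫ x, max (-x) 0 ∂μ := by
    rw [← integral_sub hintp hintn]
    refine integral_congr_ae (Filter.Eventually.of_forall fun x => ?_)
    rcases le_total x 0 with h | h
    · simp [max_eq_right h, max_eq_left (by linarith : (0:ℝ) ≤ -x)]
    · simp [max_eq_left h, max_eq_right (by linarith : -x ≤ (0:ℝ))]
  -- integrability on the interval
  have hvol : volume (Set.Ioc (0:ℝ) (2*N)) < ⊤ := by
    rw [Real.volume_Ioc]
    exact ENNReal.ofReal_lt_top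
  have hiF : ∀ g : ℝ → ℝ, Measurable g → (∀ t, |g t| ≤ 1) →
      IntegrableOn g (Set.Ioc (0:ℝ) (2*N)) volume := by
    intro g hg hb
    refine Integrable.mono' (integrable_const 1) hg.aestronglyMeasurable ?_
    exact Filter.Eventually.of_forall fun t => hb t
  have hi1 : IntegrableOn (fun t => 1 - F t) (Set.Ioc (0:ℝ) (2*N)) volume := by
    refine hiF _ (measurable_const.sub hFmeas) fun t => abs_le.2 ⟨?_, ?_⟩ <;>
      [linarith [(hF01 t).2]; linarith [(hF01 t).1]]
  have hi2 : IntegrableOn (fun t => F (-t)) (Set.Ioc (0:ℝ) (2*N)) volume := by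
    refine hiF _ (hFmeas.comp measurable_neg) fun t => abs_le.2 ⟨?_, ?_⟩ <;>
      [linarith [(hF01 (-t)).1]; linarith [(hF01 (-t)).2]]
  have hcomb : ∫ x, x ∂μ = ∫ t in Set.Ioc 0 (2*N), ((1 - F t) - F (-t)) := by
    rw [hsplit, hP, hQ, integral_sub hi1 hi2]
  -- final bound
  have hbound : |∫ t in Set.Ioc 0 (2*N), ((1 - F t) - F (-t))| ≤ (2*s) * 2 * N := by
    have h := norm_setIntegral_le_of_norm_le_const (μ := volume)
      (f := fun t => (1 - F t) - F (-t)) (C := 2*s) hvol ?_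
    · rw [Real.norm_eq_abs] at h
      refine h.trans ?_
      rw [measureReal_def, Real.volume_Ioc, ENNReal.toReal_ofReal (by linarith)]
      nlinarith
    · intro t _
      have h1 := hsx t
      have h2 := hsx (-t)
      have h3 := snc_add_neg t
      show |(1 - F t) - F (-t)| ≤ 2 * s
      have heq : (1 - F t) - F (-t) = (Φ t - F t) + (Φ (-t) - F (-t)) := by
        simp only [Φ, F] at *
        linarith
      rw [heq]
      calc |(Φ t - F t) + (Φ (-t) - F (-t))| ≤ |Φ t - F t| + |Φ (-t) - F (-t)| := abs_add_le _ _
        _ ≤ s + s := by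
            refine add_le_add ?_ ?_
            · rw [abs_sub_comm]
              exact h1
            · rw [abs_sub_comm]
              exact h2
        _ = 2 * s := by ring
  rw [hcomb]
  nlinarith [hbound, mul_nonneg hN.le hs0]
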